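/- For every integer d ≥ 1 and every real c′ > 0 there exists a constant c = c(d, c′) > 0 such that the following holds for all N: if V is an N-element set and F is a family of (d+1)-element subsets of V with |F| ≥ c′·N^{d+1}, then there exist an integer m ≥ c·(log N)^{1/d} and pairwise disjoint m-element subsets Z₁, …, Z_{d+1} ⊆ V such that {z₁, …, z_{d+1}} ∈ F for every choice of z₁ ∈ Z₁, …, z_{d+1} ∈ Z_{d+1}. -/

import Mathlib

open Finset


private lemma descFact_bound (n m : ℕ) :
    n ^ (m + 1) ≤ n.descFactorial (m + 1) + (m + 1) ^ 2 * n ^ m := by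
  induction m with
  | zero => simp [Nat.descFactorial]
  | succ m ih =>
    have h1 : n * n.descFactorial (m+1) ≤ n.descFactorial (m+2) + (m+1) * n^(m+1) := by
      rcases le_or_gt n (m+1) with h | h
      · calc n * n.descFactorial (m+1) ≤ (m+1) * n^(m+1) :=
              Nat.mul_le_mul h (Nat.descFactorial_le_pow n (m+1))
          _ ≤ _ := Nat.le_add_left _ _
      · have hd : n.descFactorial (m+2) = (n - (m+1)) * n.descFactorial (m+1) :=
          Nat.descFactorial_succ n (m+1)
        have hdf : n.descFactorial (m+1) ≤ n ^ (m+1) := Nat.descFactorial_le_pow n (m+1)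
        have : (n - (m+1)) * n.descFactorial (m+1) + (m+1) * n.descFactorial (m+1)
            = n * n.descFactorial (m+1) := by
          rw [← Nat.add_mul, Nat.sub_add_cancel h.le]
        calc n * n.descFactorial (m+1)
            = (n - (m+1)) * n.descFactorial (m+1) + (m+1) * n.descFactorial (m+1) := this.symm
          _ ≤ n.descFactorial (m+2) + (m+1) * n^(m+1) := by
              rw [hd]; exact Nat.add_le_add_left (Nat.mul_le_mul_left _ hdf) _
    calc n ^ (m+2) = n * n^(m+1) := by ring
      _ ≤ n * (n.descFactorial (m+1) + (m+1)^2 * n^m) := Nat.mul_le_mul_left n ih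
      _ = n * n.descFactorial (m+1) + (m+1)^2 * n^(m+1) := by ring
      _ ≤ n.descFactorial (m+2) + (m+1) * n^(m+1) + (m+1)^2 * n^(m+1) := by
          exact Nat.add_le_add_right h1 _
      _ = n.descFactorial (m+2) + ((m+1) + (m+1)^2) * n^(m+1) := by ring
      _ ≤ n.descFactorial (m+2) + (m+2)^2 * n^(m+1) := by
          have : (m+1) + (m+1)^2 ≤ (m+2)^2 := by nlinarith
          exact Nat.add_le_add_left (Nat.mul_le_mul_right _ this) _


private lemma card_noninj (V : Type) [Fintype V] [DecidableEq V] (m : ℕ) (hm : 1 ≤ m)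
    [DecidablePred (fun g : Fin m → V => ¬ Function.Injective g)] :
    ((univ : Finset (Fin m → V)).filter (fun g => ¬ Function.Injective g)).card
      ≤ m ^ 2 * (Fintype.card V) ^ (m - 1) := by
  classical
  obtain ⟨m', rfl⟩ : ∃ m', m = m' + 1 := ⟨m - 1, by omega⟩
  set n := Fintype.card V with hn
  have hinj : Fintype.card {g : Fin (m'+1) → V // Function.Injective g}
      = n.descFactorial (m'+1) := by
    rw [Fintype.card_congr (Equiv.subtypeInjectiveEquivEmbedding (Fin (m'+1)) V)]
    rw [Fintype.card_embedding_eq, Fintype.card_fin]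
  have hsub : Fintype.card {g : Fin (m'+1) → V // Function.Injective g}
      = ((univ : Finset (Fin (m'+1) → V)).filter (fun g => Function.Injective g)).card :=
    Fintype.card_subtype _
  have htot : ((univ : Finset (Fin (m'+1) → V)).filter (fun g => Function.Injective g)).card
      + ((univ : Finset (Fin (m'+1) → V)).filter (fun g => ¬ Function.Injective g)).card
      = (univ : Finset (Fin (m'+1) → V)).card :=
    Finset.card_filter_add_card_filter_not _
  have hcard : (univ : Finset (Fin (m'+1) → V)).card = n ^ (m'+1) := by
    rw [Finset.card_univ, Fintype.card_fun, Fintype.card_fin]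
  have hb := descFact_bound n m'
  have hconv : (Finset.filter (fun g : Fin (m'+1) → V => ¬ Function.Injective g) univ).card
      = ((univ : Finset (Fin (m'+1) → V)).filter (fun g => ¬ Function.Injective g)).card := by
    congr 1
  simp only [Nat.add_sub_cancel]
  omega


variable {V : Type} [Fintype V] [DecidableEq V]

set_option maxHeartbeats 1000000 in
private lemma sum_slice_card {k : ℕ} (S : Finset (Fin (k+1) → V)) :
    ∑ y : Fin k → V, ((univ : Finset V).filter (fun v => Fin.snoc y v ∈ S)).card = S.card := by
  classical
  rw [Finset.card_eq_sum_card_fiberwise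
    (f := fun f : Fin (k+1) → V => Fin.init f) (t := univ) (fun x _ => mem_univ _)]
  refine Finset.sum_congr rfl (fun y _ => ?_)
  refine Finset.card_bij' (fun (v : V) (_ : v ∈ (univ : Finset V).filter (fun v => Fin.snoc y v ∈ S)) => (Fin.snoc y v : Fin (k+1) → V))
    (fun (f : Fin (k+1) → V) (_ : f ∈ S.filter (fun f => Fin.init f = y)) => f (Fin.last k))
    ?_ ?_ ?_ ?_
  · intro v hv
    simp only [mem_filter, mem_univ, true_and] at hv ⊢
    exact ⟨hv, by simp⟩
  · intro f hf
    simp only [mem_filter, mem_univ, true_and] at hf ⊢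
    obtain ⟨hfS, hfy⟩ := hf
    rw [← hfy]
    rw [Fin.snoc_init_self]
    exact hfS
  · intro v hv
    simp
  · intro f hf
    simp only [mem_filter, mem_univ, true_and] at hf
    rw [← hf.2]
    exact Fin.snoc_init_self f

private lemma sum_slice_pow {k m : ℕ} (S : Finset (Fin (k+1) → V)) :
    ∑ y : Fin k → V, ((univ : Finset V).filter (fun v => Fin.snoc y v ∈ S)).card ^ m
      = ∑ g : Fin m → V,
          ((univ : Finset (Fin k → V)).filter (fun y => ∀ j, Fin.snoc y (g j) ∈ S)).card := by
  classical
  have h1 : ∀ y : Fin k → V,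
      ((univ : Finset V).filter (fun v => Fin.snoc y v ∈ S)).card ^ m
      = ((univ : Finset (Fin m → V)).filter (fun g => ∀ j, Fin.snoc y (g j) ∈ S)).card := by
    intro y
    have he : (univ : Finset (Fin m → V)).filter (fun g => ∀ j, Fin.snoc y (g j) ∈ S)
        = Fintype.piFinset (fun _ : Fin m => (univ : Finset V).filter (fun v => Fin.snoc y v ∈ S)) := by
      ext g
      simp [Fintype.mem_piFinset]
    rw [he, Fintype.card_piFinset]
    simp
  simp_rw [h1, Finset.card_filter]
  exact Finset.sum_comm


private lemma box_lemma (V : Type) [Fintype V] [DecidableEq V] (m : ℕ) (hm : 2 ≤ m) :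
    ∀ k : ℕ, 1 ≤ k → ∀ c : ℝ, 0 < c → c ≤ 1 →
      ∀ S : Finset (Fin k → V),
        (m : ℝ)^2 * (2/c)^(m^(k-1)) ≤ (Fintype.card V : ℝ) →
        c * (Fintype.card V : ℝ)^k ≤ (S.card : ℝ) →
        ∃ A : Fin k → Finset V, (∀ i, (A i).card = m) ∧
          ∀ z : Fin k → V, (∀ i, z i ∈ A i) → z ∈ S := by
  classical
  intro k hk
  induction k, hk using Nat.le_induction with
  | base =>
    intro c hc hc1 S hH hS
    have hH1 : (m:ℝ)^2 * (2/c) ≤ (Fintype.card V : ℝ) := by simpa using hH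
    have hmm : (2:ℝ) ≤ (m:ℝ) := by exact_mod_cast hm
    have h1 : c * ((m:ℝ)^2 * (2/c)) = 2 * (m:ℝ)^2 := by field_simp
    have h2 : (m:ℝ) ≤ (S.card : ℝ) := by
      have h3 : c * ((m:ℝ)^2 * (2/c)) ≤ c * (Fintype.card V : ℝ) :=
        mul_le_mul_of_nonneg_left hH1 hc.le
      have h4 : c * (Fintype.card V : ℝ) ≤ (S.card : ℝ) := by simpa using hS
      nlinarith
    have hmS : m ≤ S.card := by exact_mod_cast h2
    obtain ⟨T, hTS, hT⟩ := Finset.exists_subset_card_eq hmS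
    have hinj : Function.Injective (fun f : Fin 1 → V => f 0) := by
      intro f g hfg
      funext i
      have : i = 0 := Subsingleton.elim _ _
      rw [this]; exact hfg
    refine ⟨fun _ => T.image (fun f => f 0), fun i => ?_, fun z hz => ?_⟩
    · rw [Finset.card_image_of_injective _ hinj, hT]
    · have h0 := hz 0
      simp only [Finset.mem_image] at h0
      obtain ⟨f, hf, hf0⟩ := h0
      have : z = f := by
        funext i
        have hi : i = 0 := Subsingleton.elim _ _
        rw [hi, ← hf0]
      rw [this]
      exact hTS hf
  | succ k hk ih =>
    intro c hc hc1 S hH hS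
    set n := Fintype.card V with hn
    have hHk : (m:ℝ)^2 * (2/c)^(m^k) ≤ (n:ℝ) := by simpa using hH
    have hmm : (2:ℝ) ≤ (m:ℝ) := by exact_mod_cast hm
    have h2c : (2:ℝ) ≤ 2/c := by
      rw [le_div_iff₀ hc]; nlinarith
    have hnR : (0:ℝ) < n := by
      have hp : (0:ℝ) < (m:ℝ)^2 * (2/c)^(m^k) := by positivity
      linarith
    have hcm : (0:ℝ) < c^m := pow_pos hc m
    -- n >= 2 m^2 / c^m
    have h2mpow : (2:ℝ) ≤ 2^m := by
      calc (2:ℝ) = 2^1 := (pow_one 2).symm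
        _ ≤ 2^m := pow_le_pow_right₀ one_le_two (by omega)
    have hstep : 2 * (m:ℝ)^2 / c^m ≤ (n:ℝ) := by
      have h1 : ((2:ℝ)/c)^m ≤ (2/c)^(m^k) :=
        pow_le_pow_right₀ (by linarith) (Nat.le_self_pow (by omega) m)
      have h2 : (2:ℝ)/c^m ≤ (2/c)^m := by
        rw [div_pow]
        exact div_le_div_of_nonneg_right h2mpow hcm.le
      calc 2*(m:ℝ)^2/c^m = (m:ℝ)^2 * (2/c^m) := by ring
        _ ≤ (m:ℝ)^2 * (2/c)^m := mul_le_mul_of_nonneg_left h2 (by positivity)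
        _ ≤ (m:ℝ)^2 * (2/c)^(m^k) := mul_le_mul_of_nonneg_left h1 (by positivity)
        _ ≤ n := hHk
    have h2m2 : 2*(m:ℝ)^2 ≤ c^m * n := by
      rw [div_le_iff₀ hcm] at hstep; linarith
    -- slices and double counting
    set D : (Fin k → V) → Finset V :=
      fun y => (univ : Finset V).filter (fun v => Fin.snoc y v ∈ S) with hD
    set E : (Fin m → V) → Finset (Fin k → V) :=
      fun g => (univ : Finset (Fin k → V)).filter (fun y => ∀ j, Fin.snoc y (g j) ∈ S) with hE
    have hsum1 : ∑ y : Fin k → V, (D y).card = S.card := sum_slice_card S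
    have hsum2 : ∑ y : Fin k → V, (D y).card ^ m = ∑ g : Fin m → V, (E g).card :=
      sum_slice_pow S
    have hcardfun : (((univ : Finset (Fin k → V))).card : ℝ) = (n:ℝ)^k := by
      rw [Finset.card_univ, Fintype.card_fun, Fintype.card_fin]; push_cast; ring
    have hjensen := pow_sum_div_card_le_sum_pow (s := (univ : Finset (Fin k → V)))
        (f := fun y => ((D y).card : ℝ)) (fun _ _ => by positivity) (m - 1)
    rw [show m - 1 + 1 = m by omega] at hjensen
    have hsum1R : ∑ y : Fin k → V, ((D y).card : ℝ) = (S.card : ℝ) := by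
      exact_mod_cast congrArg (fun t : ℕ => (t:ℝ)) hsum1
    have hSig : c^m * (n:ℝ)^(k+m) ≤ ∑ y : Fin k → V, ((D y).card:ℝ)^m := by
      have hpow1 : (c * (n:ℝ)^(k+1))^m ≤ ((S.card:ℝ))^m :=
        pow_le_pow_left₀ (by positivity) hS m
      have hq : c^m * (n:ℝ)^((k+1)*m)
          ≤ (n:ℝ)^(k*(m-1)) * ∑ y : Fin k → V, ((D y).card:ℝ)^m := by
        have hj2 : ((S.card:ℝ))^m ≤ (n:ℝ)^(k*(m-1)) * ∑ y : Fin k → V, ((D y).card:ℝ)^m := by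
          rw [← hsum1R]
          rw [div_le_iff₀ (by rw [hcardfun, ← pow_mul]; positivity)] at hjensen
          calc (∑ y : Fin k → V, ((D y).card : ℝ))^m
              ≤ (∑ y : Fin k → V, ((D y).card:ℝ)^m) * ((univ : Finset (Fin k → V)).card:ℝ)^(m-1) := hjensen
            _ = (n:ℝ)^(k*(m-1)) * ∑ y : Fin k → V, ((D y).card:ℝ)^m := by
                rw [hcardfun, ← pow_mul]; ring
        calc c^m * (n:ℝ)^((k+1)*m) = (c * (n:ℝ)^(k+1))^m := by rw [mul_pow, ← pow_mul]
          _ ≤ ((S.card:ℝ))^m := hpow1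
          _ ≤ _ := hj2
      have hexp : (k+1)*m = k*(m-1) + (k+m) := by
        cases m with
        | zero => omega
        | succ m' => simp only [Nat.add_sub_cancel]; ring
      rw [hexp, pow_add] at hq
      apply le_of_mul_le_mul_left ?_ (pow_pos hnR (k*(m-1)))
      calc (n:ℝ)^(k*(m-1)) * (c^m * (n:ℝ)^(k+m))
          = c^m * ((n:ℝ)^(k*(m-1)) * (n:ℝ)^(k+m)) := by ring
        _ ≤ _ := hq
    have hsum2R : ∑ y : Fin k → V, ((D y).card:ℝ)^m
        = ∑ g : Fin m → V, ((E g).card : ℝ) := by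
      have h := congrArg (fun t : ℕ => (t:ℝ)) hsum2
      push_cast at h
      exact h
    set I : Finset (Fin m → V) :=
      (univ : Finset (Fin m → V)).filter (fun g => Function.Injective g) with hI
    set Ibad : Finset (Fin m → V) :=
      (univ : Finset (Fin m → V)).filter (fun g => ¬ Function.Injective g) with hIbad
    have hsplit : ∑ g : Fin m → V, ((E g).card:ℝ)
        = ∑ g ∈ I, ((E g).card:ℝ) + ∑ g ∈ Ibad, ((E g).card:ℝ) :=
      (Finset.sum_filter_add_sum_filter_not univ _ _).symm
    have hEcard : ∀ g, (E g).card ≤ n^k := fun g =>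
      le_trans (Finset.card_filter_le _ _)
        (by rw [Finset.card_univ, Fintype.card_fun, Fintype.card_fin])
    have hbadcard : (Ibad.card : ℝ) ≤ (m:ℝ)^2 * (n:ℝ)^(m-1) := by
      have h := card_noninj V m (by omega)
      rw [← hIbad] at h
      calc (Ibad.card : ℝ) ≤ ((m^2 * n^(m-1) : ℕ) : ℝ) := by exact_mod_cast h
        _ = (m:ℝ)^2 * (n:ℝ)^(m-1) := by push_cast; ring
    have hbad : ∑ g ∈ Ibad, ((E g).card:ℝ) ≤ (m:ℝ)^2 * (n:ℝ)^(m-1) * (n:ℝ)^k := by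
      calc ∑ g ∈ Ibad, ((E g).card:ℝ) ≤ ∑ _g ∈ Ibad, ((n:ℝ)^k) :=
            Finset.sum_le_sum (fun g _ => by exact_mod_cast hEcard g)
        _ = (Ibad.card:ℝ) * (n:ℝ)^k := by rw [Finset.sum_const, nsmul_eq_mul]
        _ ≤ (m:ℝ)^2 * (n:ℝ)^(m-1) * (n:ℝ)^k :=
            mul_le_mul_of_nonneg_right hbadcard (by positivity)
    set b : ℝ := c^m * (n:ℝ)^k / 2 with hb
    have hbpos : 0 < b := by positivity
    have hgood : (n:ℝ)^m * b ≤ ∑ g ∈ I, ((E g).card:ℝ) := by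
      have hek1 : (n:ℝ)^(m-1) * (n:ℝ)^k * (n:ℝ) = (n:ℝ)^(k+m) := by
        rw [← pow_add, ← pow_succ]
        congr 1
        omega
      have hek2 : (n:ℝ)^m * (n:ℝ)^k = (n:ℝ)^(k+m) := by
        rw [← pow_add]; congr 1; omega
      have hkey : (m:ℝ)^2 * (n:ℝ)^(m-1) * (n:ℝ)^k ≤ c^m * (n:ℝ)^(k+m) / 2 := by
        have := mul_le_mul_of_nonneg_right h2m2
          (by positivity : (0:ℝ) ≤ (n:ℝ)^(m-1) * (n:ℝ)^k)
        calc (m:ℝ)^2 * (n:ℝ)^(m-1) * (n:ℝ)^k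
            = (2 * (m:ℝ)^2) * ((n:ℝ)^(m-1) * (n:ℝ)^k) / 2 := by ring
          _ ≤ (c^m * (n:ℝ)) * ((n:ℝ)^(m-1) * (n:ℝ)^k) / 2 := by linarith
          _ = c^m * ((n:ℝ)^(m-1) * (n:ℝ)^k * (n:ℝ)) / 2 := by ring
          _ = c^m * (n:ℝ)^(k+m) / 2 := by rw [hek1]
      have hIs : ∑ g ∈ I, ((E g).card:ℝ)
          ≥ c^m * (n:ℝ)^(k+m) - (m:ℝ)^2 * (n:ℝ)^(m-1) * (n:ℝ)^k := by
        have := hSig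
        rw [hsum2R, hsplit] at this
        linarith
      have : (n:ℝ)^m * b = c^m * (n:ℝ)^(k+m) / 2 := by
        rw [hb, ← hek2]; ring
      linarith
    have hInonempty : I.Nonempty := by
      by_contra hne
      rw [Finset.not_nonempty_iff_eq_empty] at hne
      rw [hne, Finset.sum_empty] at hgood
      nlinarith [pow_pos hnR m]
    have hIcard : (I.card : ℝ) ≤ (n:ℝ)^m := by
      have h : I.card ≤ n^m := le_trans (Finset.card_filter_le _ _)
        (by rw [Finset.card_univ, Fintype.card_fun, Fintype.card_fin])
      exact_mod_cast h
    obtain ⟨g, hgI, hgb⟩ := Finset.exists_le_of_sum_le (f := fun _ => b)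
      (g := fun g => ((E g).card : ℝ)) hInonempty (by
        rw [Finset.sum_const, nsmul_eq_mul]
        calc (I.card:ℝ) * b ≤ (n:ℝ)^m * b := mul_le_mul_of_nonneg_right hIcard hbpos.le
          _ ≤ _ := hgood)
    have hgInj : Function.Injective g := (Finset.mem_filter.mp hgI).2
    -- apply induction hypothesis
    have hc'0 : (0:ℝ) < c^m/2 := by positivity
    have hc'1 : c^m/2 ≤ 1 := by
      have := pow_le_one₀ hc.le hc1 (n := m)
      linarith
    have hH' : (m:ℝ)^2 * (2/(c^m/2))^(m^(k-1)) ≤ (n:ℝ) := by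
      have hb1 : (2:ℝ)/(c^m/2) = 4/c^m := by
        field_simp
        norm_num
      have hb2 : (4:ℝ)/c^m ≤ (2/c)^m := by
        have h4 : (4:ℝ) ≤ 2^m := by
          calc (4:ℝ) = 2^2 := by norm_num
            _ ≤ 2^m := pow_le_pow_right₀ one_le_two hm
        rw [div_pow]
        exact div_le_div_of_nonneg_right h4 hcm.le
      have hb3 : ((2:ℝ)/c)^(m^(k-1)*m) = (2/c)^(m^k) := by
        congr 1
        rw [← pow_succ]
        congr 1
        omega
      calc (m:ℝ)^2 * (2/(c^m/2))^(m^(k-1)) = (m:ℝ)^2 * (4/c^m)^(m^(k-1)) := by rw [hb1]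
        _ ≤ (m:ℝ)^2 * ((2/c)^m)^(m^(k-1)) :=
            mul_le_mul_of_nonneg_left (pow_le_pow_left₀ (by positivity) hb2 _) (by positivity)
        _ = (m:ℝ)^2 * (2/c)^(m^k) := by rw [← pow_mul, mul_comm m (m^(k-1)), hb3]
        _ ≤ n := hHk
    have hdens : (c^m/2) * (n:ℝ)^k ≤ ((E g).card : ℝ) := by
      calc (c^m/2) * (n:ℝ)^k = b := by rw [hb]; ring
        _ ≤ _ := hgb
    obtain ⟨A, hA, hboxA⟩ := ih (c^m/2) hc'0 hc'1 (E g) hH' hdens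
    set M : Finset V := Finset.image g univ with hMdef
    have hM : M.card = m := by
      rw [hMdef, Finset.card_image_of_injective _ hgInj, Finset.card_univ, Fintype.card_fin]
    refine ⟨Fin.snoc A M, ?_, ?_⟩
    · intro i
      refine Fin.lastCases ?_ ?_ i
      · rw [Fin.snoc_last]; exact hM
      · intro j; rw [Fin.snoc_castSucc]; exact hA j
    · intro z hz
      have hy : ∀ i : Fin k, Fin.init z i ∈ A i := by
        intro i
        have h := hz i.castSucc
        rw [Fin.snoc_castSucc] at h
        simpa [Fin.init] using h
      have hyE : Fin.init z ∈ E g := hboxA _ hy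
      have hyS : ∀ j, Fin.snoc (Fin.init z) (g j) ∈ S := by
        rw [hE] at hyE
        exact (Finset.mem_filter.mp hyE).2
      have hv := hz (Fin.last k)
      rw [Fin.snoc_last] at hv
      obtain ⟨j, _, hj⟩ := Finset.mem_image.mp hv
      have hfin := hyS j
      rw [hj, Fin.snoc_init_self] at hfin
      exact hfin


private lemma enum_edge {N d : ℕ} (σ : Finset (Fin N)) (hσ : σ.card = d+1) :
    ∃ f : Fin (d+1) → Fin N, Function.Injective f ∧ Finset.image f univ = σ := by
  have hinj : Function.Injective (fun i => ((σ.orderIsoOfFin hσ i : Fin N))) := by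
    intro a b hab
    exact (σ.orderIsoOfFin hσ).injective (Subtype.ext hab)
  refine ⟨_, hinj, ?_⟩
  apply Finset.eq_of_subset_of_card_le
  · intro v hv
    rw [Finset.mem_image] at hv
    obtain ⟨i, _, rfl⟩ := hv
    exact (σ.orderIsoOfFin hσ i).2
  · rw [Finset.card_image_of_injective _ hinj, Finset.card_univ, Fintype.card_fin, hσ]

set_option maxHeartbeats 2000000 in
theorem erdos_multipartite (d : ℕ) (hd : 1 ≤ d) (c' : ℝ) (hc' : 0 < c') :
    ∃ c : ℝ, 0 < c ∧
      ∀ (N : ℕ) (F : Finset (Finset (Fin N))),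
        (∀ σ ∈ F, σ.card = d + 1) →
        c' * (N : ℝ) ^ (d + 1) ≤ (F.card : ℝ) →
        ∃ m : ℕ, c * (Real.log N) ^ ((1 : ℝ) / d) ≤ (m : ℝ) ∧
          ∃ Z : Fin (d + 1) → Finset (Fin N),
            (∀ i, (Z i).card = m) ∧
            (∀ i j, i ≠ j → Disjoint (Z i) (Z j)) ∧
            ∀ z : Fin (d + 1) → Fin N, (∀ i, z i ∈ Z i) →
              Finset.image z Finset.univ ∈ F := by
  classical
  set c'' : ℝ := min c' 1 with hc''def
  have hc''0 : 0 < c'' := lt_min hc' one_pos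
  have hc''1 : c'' ≤ 1 := min_le_right _ _
  set L : ℝ := Real.log (2 / c'') with hLdef
  have hK2 : (2:ℝ) ≤ 2 / c'' := by
    rw [le_div_iff₀ hc''0]; nlinarith
  have hL0 : 0 < L := Real.log_pos (by linarith)
  have h3L : (0:ℝ) < 3 * L := by linarith
  have hdR : (0:ℝ) < (d:ℝ) := by exact_mod_cast hd
  set c : ℝ := 1 / (2 * (3*L) ^ ((1:ℝ)/d)) with hcdef
  have hcpos : 0 < c := by positivity
  refine ⟨c, hcpos, fun N F hF hcard => ?_⟩
  by_cases hN1 : N ≤ 1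
  · -- trivial case : log N = 0
    refine ⟨0, ?_, fun _ => ∅, fun i => rfl, fun i j _ => by simp, fun z hz => ?_⟩
    · have hlog : Real.log N = 0 := by
        interval_cases N <;> simp
      rw [hlog, Real.zero_rpow (by positivity : (1:ℝ)/d ≠ 0)]
      simp
    · exact absurd (hz 0) (by simp)
  push_neg at hN1
  have hN2 : 2 ≤ N := hN1
  have hNR : (2:ℝ) ≤ (N:ℝ) := by exact_mod_cast hN2
  have hlogN : 0 < Real.log N := Real.log_pos (by linarith)
  set y : ℝ := Real.log N / (3*L) with hydef
  have hy0 : 0 ≤ y := by positivity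
  set x : ℝ := y ^ ((1:ℝ)/d) with hxdef
  have hx0 : 0 ≤ x := Real.rpow_nonneg hy0 _
  have hcx : c * (Real.log N) ^ ((1:ℝ)/d) = x / 2 := by
    rw [hxdef, hydef, Real.div_rpow hlogN.le h3L.le, hcdef]
    rw [div_div, one_div, inv_mul_eq_div, mul_comm ((3*L) ^ ((1:ℝ)/d)) 2]
  clear_value c'' L c y x
  -- the ordered-tuple version of F
  set S : Finset (Fin (d+1) → Fin N) :=
    univ.filter (fun f => Function.Injective f ∧ Finset.image f univ ∈ F) with hSdef
  have hFS : (F.card : ℝ) ≤ (S.card : ℝ) := by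
    have h : F.card ≤ S.card := by
      apply Finset.card_le_card_of_surjOn (fun f : Fin (d+1) → Fin N => Finset.image f univ)
      intro σ hσ
      rw [Finset.mem_coe] at hσ
      obtain ⟨f, hinj, him⟩ := enum_edge σ (hF σ hσ)
      refine ⟨f, ?_, him⟩
      rw [Finset.mem_coe, hSdef, Finset.mem_filter]
      exact ⟨mem_univ _, hinj, him ▸ hσ⟩
    exact_mod_cast h
  have hSd : c'' * (N:ℝ)^(d+1) ≤ (S.card : ℝ) := by
    have hle : c'' ≤ c' := by rw [hc''def]; exact min_le_left _ _
    calc c'' * (N:ℝ)^(d+1) ≤ c' * (N:ℝ)^(d+1) :=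
          mul_le_mul_of_nonneg_right hle (by positivity)
      _ ≤ (F.card : ℝ) := hcard
      _ ≤ _ := hFS
  by_cases hx2 : x < 2
  · -- m = 1 : just one edge
    have hFne : F.Nonempty := by
      rw [← Finset.card_pos]
      by_contra he
      push_neg at he
      have h0 : F.card = 0 := by omega
      rw [h0] at hcard
      push_cast at hcard
      nlinarith [pow_pos (lt_of_lt_of_le two_pos hNR) (d+1)]
    obtain ⟨σ, hσF⟩ := hFne
    obtain ⟨f, hinj, him⟩ := enum_edge σ (hF σ hσF)
    refine ⟨1, ?_, fun i => {f i}, fun i => rfl, ?_, ?_⟩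
    · rw [hcx]
      push_cast
      linarith
    · intro i j hij
      simp only [Finset.disjoint_singleton_left, Finset.mem_singleton]
      exact fun h => hij (hinj h)
    · intro z hz
      have : z = f := by
        funext i
        have := hz i
        simpa using this
      rw [this, him]
      exact hσF
  · -- main case
    push_neg at hx2
    set m : ℕ := ⌊x⌋₊ with hmdef
    have hm2 : 2 ≤ m := Nat.le_floor (by exact_mod_cast hx2)
    have hmx : (m:ℝ) ≤ x := Nat.floor_le hx0
    have hxm : x < (m:ℝ) + 1 := Nat.lt_floor_add_one x
    clear_value m
    refine ⟨m, ?_, ?_⟩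
    · rw [hcx]; linarith
    -- verify box lemma hypothesis
    have hmd : (m:ℝ)^(d:ℕ) ≤ y := by
      have h1 : (m:ℝ)^(d:ℕ) ≤ x^(d:ℕ) := pow_le_pow_left₀ (by positivity) hmx _
      have h2 : x^(d:ℕ) = y := by
        rw [hxdef, ← Real.rpow_natCast (y ^ ((1:ℝ)/d)) d, ← Real.rpow_mul hy0]
        rw [one_div_mul_cancel (by positivity : (d:ℝ) ≠ 0), Real.rpow_one]
      linarith
    have hKpos : (0:ℝ) < 2/c'' := by linarith
    have hyL : Real.log N = 3 * y * L := by
      rw [hydef]; field_simp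
    have hbox_hyp : (m:ℝ)^2 * (2/c'')^(m^d) ≤ (N:ℝ) := by
      have hm2p : (m:ℝ) ≤ 2^m := by
        exact_mod_cast (Nat.lt_two_pow_self (n := m)).le
      have hmsq : (m:ℝ)^2 ≤ (2/c'')^(2*m^d) := by
        have e1 : (m:ℝ)^2 ≤ (2:ℝ)^(2*m) := by
          rw [two_mul, pow_add]
          nlinarith [pow_pos (two_pos : (0:ℝ) < 2) m]
        have e2 : (2:ℝ)^(2*m) ≤ (2/c'')^(2*m) := pow_le_pow_left₀ (by norm_num) hK2 _
        have e3 : ((2:ℝ)/c'')^(2*m) ≤ (2/c'')^(2*m^d) := by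
          apply pow_le_pow_right₀ (by linarith)
          have : m ≤ m^d := Nat.le_self_pow (by omega) m
          omega
        linarith
      have hKmd : (0:ℝ) < (2/c'')^(m^d) := pow_pos hKpos _
      have step1 : (m:ℝ)^2 * (2/c'')^(m^d) ≤ (2/c'')^(3*m^d) := by
        calc (m:ℝ)^2 * (2/c'')^(m^d) ≤ (2/c'')^(2*m^d) * (2/c'')^(m^d) :=
              mul_le_mul_of_nonneg_right hmsq hKmd.le
          _ = (2/c'')^(3*m^d) := by rw [← pow_add]; congr 1; ring
      have step2 : ((2:ℝ)/c'')^(3*m^d) ≤ (N:ℝ) := by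
        have hexp : ((2:ℝ)/c'')^(3*m^d) = Real.exp ((3*m^d : ℕ) * L) := by
          rw [hLdef, ← Real.exp_log hKpos, ← Real.exp_nat_mul]
          rw [Real.exp_log hKpos]
        rw [hexp]
        have harg : ((3*m^d : ℕ) : ℝ) * L ≤ Real.log N := by
          rw [hyL]
          push_cast
          nlinarith
        calc Real.exp ((3*m^d : ℕ) * L) ≤ Real.exp (Real.log N) := Real.exp_le_exp.mpr harg
          _ = N := Real.exp_log (by linarith)
      linarith
    obtain ⟨A, hA, hbox⟩ := box_lemma (Fin N) m hm2 (d+1) (by omega) c'' hc''0 hc''1 S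
      (by rw [Fintype.card_fin]; simpa using hbox_hyp)
      (by rw [Fintype.card_fin]; exact hSd)
    have hAne : ∀ l, (A l).Nonempty := fun l => Finset.card_pos.mp (by rw [hA l]; omega)
    have hmemS : ∀ z : Fin (d+1) → Fin N, (∀ i, z i ∈ A i) →
        Function.Injective z ∧ Finset.image z univ ∈ F := by
      intro z hz
      have := hbox z hz
      rw [hSdef, Finset.mem_filter] at this
      exact this.2
    refine ⟨A, hA, ?_, fun z hz => (hmemS z hz).2⟩
    intro i j hij
    rw [Finset.disjoint_left]
    intro v hvi hvj
    set z : Fin (d+1) → Fin N := fun l => if l = i then v else if l = j then v else (hAne l).choose with hzdef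
    have hzmem : ∀ l, z l ∈ A l := by
      intro l
      rw [hzdef]
      by_cases h1 : l = i
      · subst h1; simpa using hvi
      · by_cases h2 : l = j
        · subst h2; simp [h1]; exact hvj
        · simp [h1, h2]; exact (hAne l).choose_spec
    have hzinj := (hmemS z hzmem).1
    have hzi : z i = v := by rw [hzdef]; simp
    have hzj : z j = v := by rw [hzdef]; simp [hij.symm]
    exact hij (hzinj (by rw [hzi, hzj]))
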